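/- Suppose F : ℝ → ℝ is nondecreasing with 0 ≤ F(x) ≤ F_∞ for all x ∈ ℝ. Let F_p = P_{Δx}F be the piecewise linear projection of F on the grid of mesh Δx > 0. Then F − F_p ∈ L¹(ℝ) and ‖F − F_p‖_{L¹(ℝ)} ≤ F_∞ · Δx. -/

import Mathlib

open MeasureTheory

/-- Piecewise linear projection on the grid of mesh `dx`: the unique function equal to
`f (j * dx)` at every grid point `j * dx` (`j ∈ ℤ`) and affine on each cell
`[j * dx, (j+1) * dx]`. -/
noncomputable def plProj (dx : ℝ) (f : ℝ → ℝ) : ℝ → ℝ := fun x =>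
  f ((⌊x / dx⌋ : ℝ) * dx) +
    ((x - (⌊x / dx⌋ : ℝ) * dx) / dx) *
      (f (((⌊x / dx⌋ : ℝ) + 1) * dx) - f ((⌊x / dx⌋ : ℝ) * dx))

/-- Third projection estimate: `F - P_{Δx} F ∈ L¹(ℝ)` and `‖F - P_{Δx} F‖_1 ≤ F_∞ Δx`. -/
theorem projection_estimate_F_L1
    (F : ℝ → ℝ) (Finf : ℝ) (hFinf : 0 < Finf)
    (hFmono : Monotone F)
    (hF0 : ∀ x, 0 ≤ F x) (hFle : ∀ x, F x ≤ Finf)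
    (dx : ℝ) (hdx : 0 < dx) :
    Integrable (fun x => F x - plProj dx F x) volume ∧
      (∫ x, |F x - plProj dx F x|) ≤ Finf * dx := by
  have hFm : Measurable F := hFmono.measurable
  set g : ℤ → ℝ := fun j => F (((j : ℝ) + 1) * dx) - F ((j : ℝ) * dx) with hgdef
  have hg0 : ∀ j, 0 ≤ g j := by
    intro j
    have h : (j : ℝ) * dx ≤ ((j : ℝ) + 1) * dx := by nlinarith
    simpa [hgdef] using sub_nonneg.2 (hFmono h)
  set G : ℝ → ℝ := fun x => g ⌊x / dx⌋ with hGdef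
  -- pointwise bound
  have hpt : ∀ x, |F x - plProj dx F x| ≤ G x := by
    intro x
    set j : ℤ := ⌊x / dx⌋ with hj
    have h1 : (j : ℝ) * dx ≤ x := by
      have h := Int.floor_le (x / dx)
      calc (j : ℝ) * dx ≤ (x / dx) * dx := mul_le_mul_of_nonneg_right h hdx.le
        _ = x := div_mul_cancel₀ x hdx.ne'
    have h2 : x ≤ ((j : ℝ) + 1) * dx := by
      have h := (Int.lt_floor_add_one (x / dx)).le
      calc x = (x / dx) * dx := (div_mul_cancel₀ x hdx.ne').symm
        _ ≤ ((j : ℝ) + 1) * dx := mul_le_mul_of_nonneg_right h hdx.le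
    have hFa : F ((j : ℝ) * dx) ≤ F x := hFmono h1
    have hFb : F x ≤ F (((j : ℝ) + 1) * dx) := hFmono h2
    have ht0 : 0 ≤ (x - (j : ℝ) * dx) / dx := div_nonneg (by linarith) hdx.le
    have ht1 : (x - (j : ℝ) * dx) / dx ≤ 1 := by
      rw [div_le_one hdx]; nlinarith
    have hd : 0 ≤ F (((j : ℝ) + 1) * dx) - F ((j : ℝ) * dx) := hg0 j
    have hGx : G x = F (((j : ℝ) + 1) * dx) - F ((j : ℝ) * dx) := rfl
    simp only [plProj, ← hj, hGx]
    rw [abs_le]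
    constructor <;>
      nlinarith [mul_le_of_le_one_left hd ht1, mul_nonneg ht0 hd]
  -- measurability
  have hjm : Measurable fun x : ℝ => ⌊x / dx⌋ :=
    Int.measurable_floor.comp (measurable_id.div_const dx)
  have hGm : Measurable G := (measurable_of_countable g).comp hjm
  have hproj : Measurable (plProj dx F) := by
    have h1 : Measurable fun x : ℝ => F ((⌊x / dx⌋ : ℝ) * dx) :=
      (measurable_of_countable fun j : ℤ => F ((j : ℝ) * dx)).comp hjm
    have h2 : Measurable fun x : ℝ => F (((⌊x / dx⌋ : ℝ) + 1) * dx) :=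
      (measurable_of_countable fun j : ℤ => F (((j : ℝ) + 1) * dx)).comp hjm
    have h3 : Measurable fun x : ℝ => (⌊x / dx⌋ : ℝ) :=
      (measurable_of_countable fun j : ℤ => (j : ℝ)).comp hjm
    exact h1.add
      (((measurable_id.sub (h3.mul_const dx)).div_const dx).mul (h2.sub h1))
  have hdiffm : Measurable fun x => F x - plProj dx F x := hFm.sub hproj
  -- cells
  set S : ℤ → Set ℝ := fun j => Set.Ico ((j : ℝ) * dx) (((j : ℝ) + 1) * dx) with hSdef
  have hSm : ∀ j, MeasurableSet (S j) := fun j => measurableSet_Ico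
  have hfloor_mem : ∀ (j : ℤ) (x : ℝ), x ∈ S j → ⌊x / dx⌋ = j := by
    intro j x hx
    obtain ⟨hx1, hx2⟩ := hx
    rw [Int.floor_eq_iff]
    constructor
    · rw [le_div_iff₀ hdx]; linarith
    · rw [div_lt_iff₀ hdx]; linarith
  have hcover : (⋃ j : ℤ, S j) = Set.univ := by
    ext x
    simp only [Set.mem_iUnion, Set.mem_univ, iff_true]
    refine ⟨⌊x / dx⌋, ?_, ?_⟩
    · calc ((⌊x / dx⌋ : ℝ)) * dx ≤ (x / dx) * dx :=
          mul_le_mul_of_nonneg_right (Int.floor_le _) hdx.le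
        _ = x := div_mul_cancel₀ x hdx.ne'
    · calc x = (x / dx) * dx := (div_mul_cancel₀ x hdx.ne').symm
        _ < ((⌊x / dx⌋ : ℝ) + 1) * dx :=
          mul_lt_mul_of_pos_right (Int.lt_floor_add_one _) hdx
  have hdisj : Pairwise (Function.onFun Disjoint S) := by
    intro i j hij
    refine Set.disjoint_left.2 fun x hxi hxj => hij ?_
    rw [← hfloor_mem i x hxi, hfloor_mem j x hxj]
  -- lintegral of G
  have key : (∫⁻ x, ENNReal.ofReal (G x)) =
      ∑' j : ℤ, ENNReal.ofReal (g j) * ENNReal.ofReal dx := by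
    rw [← setLIntegral_univ, ← hcover, lintegral_iUnion hSm hdisj]
    refine tsum_congr fun j => ?_
    have hcongr : ∀ x ∈ S j, ENNReal.ofReal (G x) = ENNReal.ofReal (g j) := by
      intro x hx
      simp [hGdef, hfloor_mem j x hx]
    rw [setLIntegral_congr_fun (hSm j) hcongr,
      setLIntegral_const]
    congr 1
    rw [hSdef]
    simp only [Real.volume_Ico]
    congr 1
    ring
  -- telescoping sum bound
  have htel : ∀ (m : ℤ) (n : ℕ),
      ∑ j ∈ Finset.Ico m (m + (n : ℤ)), g j =
        F (((m + (n : ℤ) : ℤ) : ℝ) * dx) - F ((m : ℝ) * dx) := by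
    intro m n
    induction n with
    | zero => simp
    | succ n ih =>
      have hle : m ≤ m + (n : ℤ) := by omega
      have : (m + ((n : ℕ) + 1 : ℕ) : ℤ) = (m + (n : ℤ)) + 1 := by push_cast; ring
      have hins : Finset.Ico m (m + (n : ℤ) + 1) =
          insert (m + (n : ℤ)) (Finset.Ico m (m + (n : ℤ))) := by
        ext k; simp only [Finset.mem_Ico, Finset.mem_insert]; omega
      rw [this, hins, Finset.sum_insert (by simp), ih]
      have hc : (((m + (n : ℤ)) : ℤ) : ℝ) + 1 = (((m + (n : ℤ)) + 1 : ℤ) : ℝ) := by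
        push_cast; ring
      simp only [hgdef, hc]
      ring
  have hfin : ∀ s : Finset ℤ, ∑ j ∈ s, g j ≤ Finf := by
    intro s
    rcases s.eq_empty_or_nonempty with rfl | hs
    · simpa using hFinf.le
    · set m := s.min' hs with hm
      set M := s.max' hs with hM
      have hmM : m ≤ M := s.min'_le _ (s.max'_mem hs)
      have hsub : s ⊆ Finset.Ico m (M + 1) := fun j hj =>
        Finset.mem_Ico.2 ⟨s.min'_le j hj, by have := s.le_max' j hj; omega⟩
      have h1 : ∑ j ∈ s, g j ≤ ∑ j ∈ Finset.Ico m (M + 1), g j :=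
        Finset.sum_le_sum_of_subset_of_nonneg hsub fun j _ _ => hg0 j
      have hn : M + 1 = m + ((M + 1 - m).toNat : ℤ) := by omega
      rw [hn] at h1
      rw [htel m (M + 1 - m).toNat] at h1
      calc ∑ j ∈ s, g j ≤ _ := h1
        _ ≤ Finf - 0 := sub_le_sub (hFle _) (hF0 _)
        _ = Finf := sub_zero Finf
  have hsum : (∑' j : ℤ, ENNReal.ofReal (g j)) ≤ ENNReal.ofReal Finf := by
    rw [ENNReal.tsum_eq_iSup_sum]
    refine iSup_le fun s => ?_
    rw [← ENNReal.ofReal_sum_of_nonneg fun j _ => hg0 j]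
    exact ENNReal.ofReal_le_ofReal (hfin s)
  have hGkey : (∫⁻ x, ENNReal.ofReal (G x)) ≤ ENNReal.ofReal (Finf * dx) := by
    rw [key, ENNReal.tsum_mul_right, ENNReal.ofReal_mul hFinf.le]
    exact mul_le_mul_left hsum _
  -- pointwise nnnorm bound
  have hnn : ∀ x, (‖F x - plProj dx F x‖₊ : ENNReal) ≤ ENNReal.ofReal (G x) := by
    intro x
    rw [← enorm_eq_nnnorm, ← ofReal_norm]
    exact ENNReal.ofReal_le_ofReal (by simpa using hpt x)
  have hint : Integrable (fun x => F x - plProj dx F x) volume := by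
    refine ⟨hdiffm.aestronglyMeasurable, ?_⟩
    show (∫⁻ x, (‖F x - plProj dx F x‖₊ : ENNReal)) < ⊤
    calc (∫⁻ x, (‖F x - plProj dx F x‖₊ : ENNReal)) ≤ ∫⁻ x, ENNReal.ofReal (G x) :=
          lintegral_mono fun x => hnn x
      _ ≤ ENNReal.ofReal (Finf * dx) := hGkey
      _ < ⊤ := ENNReal.ofReal_lt_top
  refine ⟨hint, ?_⟩
  have habs : (∫ x, |F x - plProj dx F x|) =
      (∫⁻ x, ENNReal.ofReal |F x - plProj dx F x|).toReal := by
    rw [integral_eq_lintegral_of_nonneg_ae (Filter.Eventually.of_forall fun x => abs_nonneg _)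
      hdiffm.abs.aestronglyMeasurable]
  rw [habs]
  refine ENNReal.toReal_le_of_le_ofReal (by positivity) ?_
  calc (∫⁻ x, ENNReal.ofReal |F x - plProj dx F x|) ≤ ∫⁻ x, ENNReal.ofReal (G x) :=
        lintegral_mono fun x => ENNReal.ofReal_le_ofReal (hpt x)
    _ ≤ ENNReal.ofReal (Finf * dx) := hGkey
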